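/- arXiv:2204.09956 — 2 statements merged into one kernel-verified Lean document; each statement's English description precedes it below -/
import Mathlib

section
/- For every positive integer k, the infinite dihedral group contains exactly ⌊3k/2⌋ conjugacy classes of subgroups that are isomorphic to the infinite dihedral group and have index at most k. -/
open Pointwise

abbrev InfDihedral : Type := Monoid.Coprod (Multiplicative (ZMod 2)) (Multiplicative (ZMod 2))


@[ext] structure DG where
  t : ℤ
  r : Bool
  deriving DecidableEq

namespace DG

instance : Mul DG := ⟨fun x y => ⟨x.t + (if x.r then -y.t else y.t), xor x.r y.r⟩⟩
instance : One DG := ⟨⟨0, false⟩⟩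
instance : Inv DG := ⟨fun x => ⟨if x.r then x.t else -x.t, x.r⟩⟩

lemma mul_def (x y : DG) : x * y = ⟨x.t + (if x.r then -y.t else y.t), xor x.r y.r⟩ := rfl
lemma one_def : (1 : DG) = ⟨0, false⟩ := rfl
lemma inv_def (x : DG) : x⁻¹ = ⟨if x.r then x.t else -x.t, x.r⟩ := rfl

instance : Group DG where
  mul_assoc a b c := by
    cases a with | mk a1 a2 => cases b with | mk b1 b2 => cases c with | mk c1 c2 =>
    simp only [mul_def]
    cases a2 <;> cases b2 <;> cases c2 <;> simp <;> ring
  one_mul a := by cases a; simp [mul_def, one_def]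
  mul_one a := by cases a with | mk a1 a2 => cases a2 <;> simp [mul_def, one_def]
  inv_mul_cancel a := by
    cases a with | mk a1 a2 => cases a2 <;> simp [mul_def, inv_def, one_def]

instance : Infinite DG := Infinite.of_injective (fun n : ℤ => ⟨n, false⟩) (by
  intro a b h; simpa using congrArg DG.t h)

lemma tau_zpow (m : ℤ) : (⟨1, false⟩ : DG) ^ m = ⟨m, false⟩ := by
  induction m using Int.induction_on with
  | zero => rfl
  | succ n ih => rw [zpow_add_one, ih]; simp [mul_def]
  | pred n ih => rw [zpow_sub_one, ih]; simp [mul_def, inv_def]; omega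

end DG

namespace DtoI

open Monoid Multiplicative

def a : InfDihedral := Coprod.inl (ofAdd 1)
def b : InfDihedral := Coprod.inr (ofAdd 1)
def tt : InfDihedral := b * a

lemma a_mul_a : a * a = 1 := by
  rw [a, ← MonoidHom.map_mul]
  have : (ofAdd (1 : ZMod 2)) * ofAdd 1 = 1 := by decide
  rw [this, MonoidHom.map_one]

lemma b_mul_b : b * b = 1 := by
  rw [b, ← MonoidHom.map_mul]
  have : (ofAdd (1 : ZMod 2)) * ofAdd 1 = 1 := by decide
  rw [this, MonoidHom.map_one]

lemma a_inv : a⁻¹ = a := by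
  rw [inv_eq_iff_mul_eq_one, a_mul_a]

lemma b_inv : b⁻¹ = b := by
  rw [inv_eq_iff_mul_eq_one, b_mul_b]

lemma conj_tt : a * tt * a⁻¹ = tt⁻¹ := by
  rw [a_inv, tt, mul_inv_rev, a_inv, b_inv, mul_assoc a (b * a) a, mul_assoc b a a,
    a_mul_a, mul_one]

lemma conj_tt_zpow (m : ℤ) : a * tt ^ m * a⁻¹ = tt ^ (-m) := by
  have h1 : a * tt ^ m * a⁻¹ = (MulAut.conj a) (tt ^ m) := rfl
  have h2 : (MulAut.conj a) tt = tt⁻¹ := conj_tt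
  rw [h1, map_zpow, h2, inv_zpow, ← zpow_neg]

lemma a_shift (m' : ℤ) : a * tt ^ m' = tt ^ (-m') * a := by
  rw [← conj_tt_zpow m']; group

noncomputable def psi : DG →* InfDihedral := by
  refine MonoidHom.mk' (fun x => tt ^ x.t * (if x.r then a else 1)) ?_
  intro x y
  cases x with | mk m s => cases y with | mk m' s' =>
  cases s <;> cases s'
  · show tt ^ (m + m') * 1 = (tt ^ m * 1) * (tt ^ m' * 1)
    rw [mul_one, mul_one, mul_one, zpow_add]
  · show tt ^ (m + m') * a = (tt ^ m * 1) * (tt ^ m' * a)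
    rw [mul_one, zpow_add, mul_assoc]
  · show tt ^ (m + -m') * a = tt ^ m * a * (tt ^ m' * 1)
    rw [mul_one, mul_assoc, a_shift, ← mul_assoc, ← zpow_add]
  · show tt ^ (m + -m') * 1 = tt ^ m * a * (tt ^ m' * a)
    rw [mul_one, mul_assoc, ← mul_assoc a, a_shift, mul_assoc (tt ^ (-m')), a_mul_a,
      mul_one, ← zpow_add]

def fa : Multiplicative (ZMod 2) →* DG :=
  MonoidHom.mk' (fun x => ⟨0, decide (toAdd x = 1)⟩) (by decide)

def fb : Multiplicative (ZMod 2) →* DG :=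
  MonoidHom.mk' (fun x => ⟨if toAdd x = 1 then 1 else 0, decide (toAdd x = 1)⟩) (by decide)

def phi : InfDihedral →* DG := Coprod.lift fa fb

lemma phi_a : phi a = ⟨0, true⟩ := by
  rw [a, phi, Coprod.lift_apply_inl]; rfl

lemma phi_b : phi b = ⟨1, true⟩ := by
  rw [b, phi, Coprod.lift_apply_inr]; rfl

lemma phi_tt : phi tt = ⟨1, false⟩ := by
  rw [tt, map_mul, phi_a, phi_b]; rfl

lemma psi_apply (m : ℤ) (s : Bool) : psi ⟨m, s⟩ = tt ^ m * (if s then a else 1) := rfl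

lemma phi_comp_psi : phi.comp psi = MonoidHom.id DG := by
  refine MonoidHom.ext fun x => ?_
  cases x with | mk m s =>
  rw [MonoidHom.comp_apply, MonoidHom.id_apply, psi_apply, map_mul, map_zpow, phi_tt]
  cases s
  · show (⟨1, false⟩ : DG) ^ m * phi 1 = ⟨m, false⟩
    rw [map_one, mul_one, DG.tau_zpow]
  · show (⟨1, false⟩ : DG) ^ m * phi a = ⟨m, true⟩
    rw [phi_a, DG.tau_zpow]
    simp [DG.mul_def]

lemma psi_comp_phi : psi.comp phi = MonoidHom.id InfDihedral := by
  have key : ∀ y : Multiplicative (ZMod 2), y = 1 ∨ y = ofAdd 1 := by decide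
  apply Coprod.hom_ext <;> refine MonoidHom.ext fun x => ?_ <;>
    rw [MonoidHom.comp_apply, MonoidHom.comp_apply, MonoidHom.comp_apply, MonoidHom.id_apply] <;>
    rcases key x with h | h <;> subst h
  · simp
  · show psi (phi a) = a
    rw [phi_a, psi_apply]
    show tt ^ (0 : ℤ) * a = a
    rw [zpow_zero, one_mul]
  · simp
  · show psi (phi b) = b
    rw [phi_b, psi_apply]
    show tt ^ (1 : ℤ) * a = b
    rw [zpow_one, tt, mul_assoc, a_mul_a, mul_one]

noncomputable def E : InfDihedral ≃* DG :=
  MonoidHom.toMulEquiv phi psi psi_comp_phi phi_comp_psi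

end DtoI

namespace DG

def K (n : ℕ) (i : ℤ) : Subgroup DG where
  carrier := {p | (n : ℤ) ∣ p.t - (if p.r then i else 0)}
  one_mem' := by simp [one_def]
  mul_mem' := by
    rintro ⟨m, s⟩ ⟨m', s'⟩ h1 h2
    simp only [Set.mem_setOf_eq, mul_def] at *
    cases s <;> cases s' <;> simp at h1 h2 ⊢ <;>
      obtain ⟨u, hu⟩ := h1 <;> obtain ⟨v, hv⟩ := h2
    · exact ⟨u + v, by rw [mul_add]; linarith⟩
    · exact ⟨u + v, by rw [mul_add]; linarith⟩
    · exact ⟨u - v, by rw [mul_sub]; linarith⟩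
    · exact ⟨u - v, by rw [mul_sub]; linarith⟩
  inv_mem' := by
    rintro ⟨m, s⟩ h
    simp only [Set.mem_setOf_eq, inv_def] at *
    cases s <;> simp at h ⊢ <;> obtain ⟨u, hu⟩ := h
    · exact ⟨u, hu⟩
    · exact ⟨u, hu⟩

lemma mem_K {n : ℕ} {i : ℤ} {x : DG} : x ∈ K n i ↔ (n : ℤ) ∣ x.t - (if x.r then i else 0) :=
  Iff.rfl

lemma mem_K_false {n : ℕ} {i m : ℤ} : (⟨m, false⟩ : DG) ∈ K n i ↔ (n : ℤ) ∣ m := by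
  simp [mem_K]

lemma mem_K_true {n : ℕ} {i m : ℤ} : (⟨m, true⟩ : DG) ∈ K n i ↔ (n : ℤ) ∣ m - i := by
  simp [mem_K]

lemma K_eq_of_dvd {n : ℕ} {i i' : ℤ} (h : (n : ℤ) ∣ i - i') : K n i = K n i' := by
  obtain ⟨w, hw⟩ := h
  ext ⟨m, s⟩
  cases s
  · simp [mem_K_false]
  · rw [mem_K_true, mem_K_true]
    constructor <;> intro ⟨u, hu⟩
    · exact ⟨u + w, by rw [mul_add]; linarith⟩
    · exact ⟨u - w, by rw [mul_sub]; linarith⟩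

end DG

namespace DG

def psiK (n : ℕ) (i : ℤ) : DG →* DG :=
  MonoidHom.mk' (fun x => ⟨n * x.t + (if x.r then i else 0), x.r⟩) (by
    rintro ⟨m, s⟩ ⟨m', s'⟩
    cases s <;> cases s' <;> refine DG.ext ?_ ?_ <;> simp [mul_def] <;> ring)

lemma psiK_apply (n : ℕ) (i m : ℤ) (s : Bool) :
    psiK n i ⟨m, s⟩ = ⟨n * m + (if s then i else 0), s⟩ := rfl

lemma psiK_range (n : ℕ) (i : ℤ) : (psiK n i).range = K n i := by
  ext ⟨m, s⟩
  simp only [MonoidHom.mem_range]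
  cases s
  · rw [mem_K_false]
    constructor
    · rintro ⟨⟨q, sq⟩, hq⟩
      rw [psiK_apply] at hq
      cases sq
      · simp only [DG.mk.injEq] at hq
        exact ⟨q, by have := hq.1; simp at this; linarith⟩
      · simp at hq
    · rintro ⟨q, rfl⟩
      exact ⟨⟨q, false⟩, by rw [psiK_apply]; simp⟩
  · rw [mem_K_true]
    constructor
    · rintro ⟨⟨q, sq⟩, hq⟩
      rw [psiK_apply] at hq
      cases sq
      · simp at hq
      · simp only [DG.mk.injEq] at hq
        exact ⟨q, by have := hq.1; simp at this; linarith⟩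
    · rintro ⟨q, hq⟩
      refine ⟨⟨q, true⟩, ?_⟩
      rw [psiK_apply]
      refine DG.ext ?_ rfl
      show (n : ℤ) * q + (if true then i else 0) = m
      simp only [if_true]
      linarith

lemma psiK_inj (n : ℕ) (hn : 0 < n) (i : ℤ) : Function.Injective (psiK n i) := by
  rintro ⟨m, s⟩ ⟨m', s'⟩ h
  rw [psiK_apply, psiK_apply] at h
  have h1 := congrArg DG.t h
  have h2 := congrArg DG.r h
  simp only [] at h1 h2
  refine DG.ext ?_ h2
  subst h2
  have hn' : (n : ℤ) ≠ 0 := by exact_mod_cast hn.ne'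
  have : (n : ℤ) * m = n * m' := by linarith
  exact mul_left_cancel₀ hn' this

noncomputable def KEquiv (n : ℕ) (hn : 0 < n) (i : ℤ) : DG ≃* K n i :=
  (MonoidHom.ofInjective (psiK_inj n hn i)).trans (MulEquiv.subgroupCongr (psiK_range n i))

end DG

namespace DG

def fK (n : ℕ) (i : ℤ) (x : DG) : ZMod n := ((x.t - if x.r then i else 0 : ℤ) : ZMod n)

lemma fK_key (n : ℕ) (i : ℤ) (x y : DG) :
    fK n i x = fK n i y ↔ x⁻¹ * y ∈ K n i := by
  cases x with | mk m s => cases y with | mk m' s' =>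
  rw [fK, fK, ZMod.intCast_eq_intCast_iff, Int.modEq_iff_dvd, inv_def, mul_def, mem_K]
  cases s <;> cases s' <;> simp <;> constructor <;> rintro ⟨u, hu⟩ <;>
    first
      | exact ⟨u, by linear_combination hu⟩
      | exact ⟨-u, by linear_combination -hu⟩
      | exact ⟨-u, by linear_combination hu⟩
      | exact ⟨u, by linear_combination -hu⟩

noncomputable def quotEquiv (n : ℕ) (i : ℤ) : (DG ⧸ K n i) ≃ ZMod n := by
  refine Equiv.ofBijective (fun q => Quotient.liftOn' q (fK n i) ?_) ⟨?_, ?_⟩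
  · intro a b h
    rw [QuotientGroup.leftRel_apply] at h
    exact (fK_key n i a b).mpr h
  · intro q1 q2
    refine Quotient.inductionOn₂' q1 q2 fun a b h => ?_
    exact Quotient.sound' ((QuotientGroup.leftRel_apply).mpr ((fK_key n i a b).mp h))
  · intro z
    obtain ⟨m, rfl⟩ := ZMod.intCast_surjective z
    exact ⟨QuotientGroup.mk ⟨m, false⟩, by simp [fK]⟩

lemma index_K (n : ℕ) (i : ℤ) : (K n i).index = n := by
  rw [Subgroup.index_eq_card, Nat.card_congr (quotEquiv n i), Nat.card_zmod]

lemma smul_K (g : DG) (n : ℕ) (i : ℤ) :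
    (ConjAct.toConjAct g) • K n i = K n (2 * g.t + (if g.r then -i else i)) := by
  cases g with | mk c s =>
  ext ⟨m, u⟩
  rw [Subgroup.mem_pointwise_smul_iff_inv_smul_mem, ConjAct.smul_def, map_inv,
    ConjAct.ofConjAct_toConjAct, inv_inv, inv_def, mul_def, mul_def, mem_K, mem_K]
  cases s <;> cases u <;> simp <;> constructor <;> rintro ⟨u, hu⟩ <;>
    first
      | exact ⟨u, by linear_combination hu⟩
      | exact ⟨-u, by linear_combination -hu⟩
      | exact ⟨-u, by linear_combination hu⟩
      | exact ⟨u, by linear_combination -hu⟩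

lemma K_eq_imp {n n' : ℕ} {i i' : ℤ} (hn : 0 < n) (hn' : 0 < n')
    (h : K n i = K n' i') : n = n' ∧ (n : ℤ) ∣ i - i' := by
  have h1 : ((n : ℤ)) ∣ (n' : ℤ) := by
    have : (⟨(n' : ℤ), false⟩ : DG) ∈ K n' i' := mem_K_false.mpr dvd_rfl
    rw [← h] at this
    exact mem_K_false.mp this
  have h2 : ((n' : ℤ)) ∣ (n : ℤ) := by
    have : (⟨(n : ℤ), false⟩ : DG) ∈ K n i := mem_K_false.mpr dvd_rfl
    rw [h] at this
    exact mem_K_false.mp this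
  have hnn : n = n' := by
    have := Nat.dvd_antisymm (by exact_mod_cast h1) (by exact_mod_cast h2)
    exact this
  subst hnn
  refine ⟨rfl, ?_⟩
  have : (⟨i, true⟩ : DG) ∈ K n i := mem_K_true.mpr (by simp)
  rw [h] at this
  exact mem_K_true.mp this

end DG

namespace DG

def H0 (H : Subgroup DG) : AddSubgroup ℤ where
  carrier := {m | (⟨m, false⟩ : DG) ∈ H}
  zero_mem' := H.one_mem
  add_mem' := by
    intro a b ha hb
    have := H.mul_mem ha hb
    simpa [mul_def] using this
  neg_mem' := by
    intro a ha
    have := H.inv_mem ha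
    simpa [inv_def] using this

lemma mem_H0 {H : Subgroup DG} {m : ℤ} : m ∈ H0 H ↔ (⟨m, false⟩ : DG) ∈ H := Iff.rfl

lemma DG_not_comm : ¬ (∀ x y : DG, x * y = y * x) := by
  intro h
  have := h ⟨0, true⟩ ⟨1, false⟩
  simp [mul_def] at this

/-- main classification -/
lemma classify (H : Subgroup DG) (hi : H.index ≠ 0)
    (hiso : Nonempty (H ≃* DG)) : ∃ n : ℕ, 0 < n ∧ ∃ i : ℤ, H = K n i := by
  obtain ⟨e⟩ := hiso
  -- there is an element with r = true
  have hnab : ∃ x ∈ H, x.r = true := by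
    by_contra hc
    push_neg at hc
    have hcomm : ∀ x y : H, x * y = y * x := by
      rintro ⟨⟨m, s⟩, hx⟩ ⟨⟨m', s'⟩, hy⟩
      have hs : s = false := by
        have := hc _ hx; cases s; rfl; exact absurd rfl this
      have hs' : s' = false := by
        have := hc _ hy; cases s'; rfl; exact absurd rfl this
      subst hs; subst hs'
      refine Subtype.ext ?_
      show (⟨m, false⟩ : DG) * ⟨m', false⟩ = ⟨m', false⟩ * ⟨m, false⟩
      simp [mul_def, add_comm]
    refine DG_not_comm fun x y => ?_
    have := hcomm (e.symm x) (e.symm y)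
    have h2 := congrArg e this
    simpa using h2
  obtain ⟨⟨j, sj⟩, hjH, hjr⟩ := hnab
  simp only at hjr
  subst hjr
  -- the subgroup of translations
  obtain ⟨d, hd⟩ := Int.subgroup_cyclic (H0 H)
  have hmem : ∀ m : ℤ, (⟨m, false⟩ : DG) ∈ H ↔ d ∣ m := by
    intro m
    rw [← mem_H0, hd, AddSubgroup.mem_closure_singleton]
    constructor
    · rintro ⟨q, rfl⟩; exact ⟨q, by rw [zsmul_eq_mul, Int.cast_id]; ring⟩
    · rintro ⟨q, rfl⟩; exact ⟨q, by rw [zsmul_eq_mul, Int.cast_id]; ring⟩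
  by_cases hd0 : d = 0
  · -- H is finite : contradiction with index ≠ 0
    exfalso
    subst hd0
    have hsub : (H : Set DG) ⊆ {(⟨0, false⟩ : DG), ⟨j, true⟩} := by
      rintro ⟨m, s⟩ hm
      cases s
      · have : (0:ℤ) ∣ m := (hmem m).mp hm
        simp at this
        subst this
        exact Set.mem_insert _ _
      · have : (⟨m, true⟩ : DG) * ⟨j, true⟩ ∈ H := H.mul_mem hm hjH
        have h2 : (⟨m - j, false⟩ : DG) ∈ H := by
          simpa [mul_def, ← sub_eq_add_neg] using this
        have : (0:ℤ) ∣ m - j := (hmem _).mp h2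
        simp at this
        have : m = j := by omega
        subst this
        exact Set.mem_insert_of_mem _ rfl
    have hfin : Set.Finite (H : Set DG) :=
      Set.Finite.subset ((Set.finite_singleton _).insert _) hsub
    have hcard : Nat.card H ≠ 0 := by
      have : Finite (H : Set DG) := hfin
      have hne : Nonempty H := ⟨1⟩
      exact Nat.card_ne_zero.mpr ⟨hne, this⟩
    have hmi := H.card_mul_index
    have hDG : Nat.card DG = 0 := Nat.card_eq_zero_of_infinite
    rw [hDG] at hmi
    rcases Nat.mul_eq_zero.mp hmi with h | h
    · exact hcard h
    · exact hi h
  · refine ⟨d.natAbs, by positivity, j, ?_⟩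
    have hmem' : ∀ m : ℤ, (⟨m, false⟩ : DG) ∈ H ↔ (d.natAbs : ℤ) ∣ m := by
      intro m; rw [hmem m, Int.natAbs_dvd]
    ext ⟨m, s⟩
    cases s
    · rw [mem_K_false]; exact hmem' m
    · rw [mem_K_true]
      constructor
      · intro hm
        have : (⟨m, true⟩ : DG) * ⟨j, true⟩ ∈ H := H.mul_mem hm hjH
        have h2 : (⟨m - j, false⟩ : DG) ∈ H := by simpa [mul_def, ← sub_eq_add_neg] using this
        exact (hmem' _).mp h2
      · intro hdvd
        have h2 : (⟨m - j, false⟩ : DG) ∈ H := (hmem' _).mpr hdvd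
        have := H.mul_mem h2 hjH
        simpa [mul_def] using this

end DG

namespace DG

def Canon (k : ℕ) (p : ℕ × ℕ) : Prop :=
  1 ≤ p.1 ∧ p.1 ≤ k ∧ (p.2 = 0 ∨ (p.2 = 1 ∧ p.1 % 2 = 0))

instance (k : ℕ) (p : ℕ × ℕ) : Decidable (Canon k p) := by
  unfold Canon; infer_instance

def CFinset (k : ℕ) : Finset (ℕ × ℕ) :=
  (Finset.range (k+1) ×ˢ Finset.range 2).filter (Canon k)

lemma mem_CFinset {k : ℕ} {p : ℕ × ℕ} : p ∈ CFinset k ↔ Canon k p := by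
  cases p with | mk a b =>
  simp only [CFinset, Finset.mem_filter, Finset.mem_product, Finset.mem_range, Canon]
  omega

lemma CFinset_card (k : ℕ) : (CFinset k).card = 3 * k / 2 := by
  induction k with
  | zero => decide
  | succ k ih =>
    by_cases hpar : (k+1) % 2 = 0
    · have hset : CFinset (k+1) = insert (k+1, 0) (insert (k+1, 1) (CFinset k)) := by
        ext ⟨a, b⟩
        simp only [mem_CFinset, Canon, Finset.mem_insert, Prod.mk.injEq, mem_CFinset]
        omega
      rw [hset, Finset.card_insert_of_notMem, Finset.card_insert_of_notMem, ih]
      · omega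
      · rw [mem_CFinset]; simp [Canon]
      · simp only [Finset.mem_insert, Prod.mk.injEq, mem_CFinset, Canon]
        omega
    · have hset : CFinset (k+1) = insert (k+1, 0) (CFinset k) := by
        ext ⟨a, b⟩
        simp only [mem_CFinset, Canon, Finset.mem_insert, Prod.mk.injEq, mem_CFinset]
        omega
      rw [hset, Finset.card_insert_of_notMem, ih]
      · omega
      · rw [mem_CFinset]; simp [Canon]

lemma card_canon (k : ℕ) : Nat.card {p : ℕ × ℕ // Canon k p} = 3 * k / 2 := by
  have e : {p : ℕ × ℕ // Canon k p} ≃ {p : ℕ × ℕ // p ∈ CFinset k} :=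
    Equiv.subtypeEquivRight (fun p => mem_CFinset.symm)
  rw [Nat.card_congr e, Nat.card_eq_fintype_card, Fintype.card_coe]
  exact CFinset_card k

lemma mem_orbit_iff' (H H' : Subgroup DG) :
    H' ∈ MulAction.orbit (ConjAct DG) H ↔ ∃ g : DG, ConjAct.toConjAct g • H = H' := by
  rw [MulAction.mem_orbit_iff]
  constructor
  · rintro ⟨g, hg⟩
    exact ⟨ConjAct.ofConjAct g, by rwa [ConjAct.toConjAct_ofConjAct]⟩
  · rintro ⟨g, hg⟩
    exact ⟨ConjAct.toConjAct g, hg⟩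

lemma orbit_K_canon (n : ℕ) (hn : 0 < n) (i : ℤ) :
    ∃ r : ℕ, (r = 0 ∨ (r = 1 ∧ n % 2 = 0)) ∧
      K n (r : ℤ) ∈ MulAction.orbit (ConjAct DG) (K n i) := by
  by_cases hpar : n % 2 = 0
  · -- n even : conjugate to K n (i % 2)
    refine ⟨(i % 2).toNat, ?_, ?_⟩
    · have := Int.emod_two_eq i
      omega
    · obtain ⟨c, hc⟩ : ∃ c : ℤ, 2 * c + i = ((i % 2).toNat : ℤ) := by
        refine ⟨(((i % 2).toNat : ℤ) - i) / 2, ?_⟩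
        have := Int.emod_two_eq i
        omega
      rw [mem_orbit_iff']
      refine ⟨⟨c, false⟩, ?_⟩
      rw [smul_K]
      simp only [Bool.false_eq_true, if_false]
      rw [hc]
  · -- n odd : conjugate to K n 0
    refine ⟨0, Or.inl rfl, ?_⟩
    have hgcdn : Nat.gcd 2 n = 1 := by
      have h1 : Nat.gcd 2 n ∣ 2 := Nat.gcd_dvd_left 2 n
      have h2 : Nat.gcd 2 n ∣ n := Nat.gcd_dvd_right 2 n
      rcases (Nat.dvd_prime Nat.prime_two).mp h1 with h | h
      · exact h
      · rw [h] at h2; omega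
    have hgcd : Int.gcd 2 (n : ℤ) = 1 := by
      have : Int.gcd ((2:ℕ) : ℤ) ((n:ℕ) : ℤ) = Nat.gcd 2 n := Int.gcd_natCast_natCast 2 n
      simpa using this.trans hgcdn
    have hbez := Int.gcd_eq_gcd_ab 2 (n : ℤ)
    rw [hgcd] at hbez
    set a := Int.gcdA 2 (n : ℤ)
    set b := Int.gcdB 2 (n : ℤ)
    refine (mem_orbit_iff' _ _).mpr ⟨⟨-i * a, false⟩, ?_⟩
    rw [smul_K]
    simp only [Bool.false_eq_true, if_false]
    refine K_eq_of_dvd ?_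
    refine ⟨i * b, ?_⟩
    push_cast at hbez ⊢
    linear_combination i * hbez

lemma canon_orbit_inj (k : ℕ) (p p' : ℕ × ℕ) (hp : Canon k p) (hp' : Canon k p')
    (h : MulAction.orbit (ConjAct DG) (K p.1 (p.2 : ℤ)) =
         MulAction.orbit (ConjAct DG) (K p'.1 (p'.2 : ℤ))) : p = p' := by
  obtain ⟨n, r⟩ := p
  obtain ⟨n', r'⟩ := p'
  obtain ⟨hn1, hnk, hr⟩ := hp
  obtain ⟨hn'1, hn'k, hr'⟩ := hp'
  simp only at *
  have hh := MulAction.orbit_eq_iff.mp h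
  obtain ⟨g, hg⟩ := (mem_orbit_iff' _ _).mp hh
  rw [smul_K] at hg
  obtain ⟨hnn, hdvd⟩ := K_eq_imp (by omega) (by omega) hg
  subst hnn
  refine Prod.ext rfl ?_
  simp only
  rcases hr with rfl | ⟨rfl, hev⟩ <;> rcases hr' with rfl | ⟨rfl, hev'⟩
  · rfl
  · exfalso
    have h2 := (Int.natCast_dvd_natCast.mpr (show 2 ∣ n' by omega)).trans hdvd
    cases hgr : g.r <;> rw [hgr] at h2 <;> simp at h2 <;> omega
  · exfalso
    have h2 := (Int.natCast_dvd_natCast.mpr (show 2 ∣ n' by omega)).trans hdvd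
    cases hgr : g.r <;> rw [hgr] at h2 <;> simp at h2 <;> omega
  · rfl

end DG

namespace DG

theorem countD (k : ℕ) :
    Nat.card {S : Set (Subgroup DG) // ∃ H : Subgroup DG,
      Nonempty (H ≃* DG) ∧ H.index ≠ 0 ∧ H.index ≤ k ∧
      S = MulAction.orbit (ConjAct DG) H} = 3 * k / 2 := by
  rw [← card_canon k]
  refine (Nat.card_congr (Equiv.ofBijective
    (fun p => ⟨MulAction.orbit (ConjAct DG) (K p.1.1 (p.1.2 : ℤ)),
      K p.1.1 (p.1.2 : ℤ), ⟨(KEquiv p.1.1 p.2.1 (p.1.2 : ℤ)).symm⟩,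
      by rw [index_K]; exact Nat.one_le_iff_ne_zero.mp p.2.1,
      by rw [index_K]; exact p.2.2.1, rfl⟩)
    ⟨?_, ?_⟩)).symm
  · rintro ⟨p, hp⟩ ⟨p', hp'⟩ hEq
    have hor : MulAction.orbit (ConjAct DG) (K p.1 (p.2 : ℤ)) =
        MulAction.orbit (ConjAct DG) (K p'.1 (p'.2 : ℤ)) := congrArg Subtype.val hEq
    exact Subtype.ext (canon_orbit_inj k p p' hp hp' hor)
  · rintro ⟨S, H, ⟨eH⟩, hind, hle, rfl⟩
    obtain ⟨n, hn, i, rfl⟩ := classify H hind ⟨eH⟩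
    have hnk : n ≤ k := by rw [index_K] at hle; exact hle
    obtain ⟨r, hrc, hmem⟩ := orbit_K_canon n hn i
    exact ⟨⟨(n, r), hn, hnk, hrc⟩, Subtype.ext (MulAction.orbit_eq_iff.mpr hmem)⟩

end DG

section Transport

open MulAction

lemma mem_orbit_iff'' {G : Type*} [Group G] (H H' : Subgroup G) :
    H' ∈ orbit (ConjAct G) H ↔ ∃ g : G, ConjAct.toConjAct g • H = H' := by
  rw [MulAction.mem_orbit_iff]
  constructor
  · rintro ⟨g, hg⟩
    exact ⟨ConjAct.ofConjAct g, by rwa [ConjAct.toConjAct_ofConjAct]⟩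
  · rintro ⟨g, hg⟩
    exact ⟨ConjAct.toConjAct g, hg⟩

variable {G G' : Type*} [Group G] [Group G'] (f : G ≃* G')

lemma index_map_equiv (H : Subgroup G) :
    (H.map (f : G →* G')).index = H.index := by
  rw [Subgroup.map_equiv_eq_comap_symm]
  exact Subgroup.index_comap_of_surjective _ f.symm.surjective

lemma map_conjAct_smul (g : G) (H : Subgroup G) :
    (ConjAct.toConjAct g • H).map (f : G →* G') =
      ConjAct.toConjAct (f g) • H.map (f : G →* G') := by
  ext x
  simp only [Subgroup.mem_map, Subgroup.mem_pointwise_smul_iff_inv_smul_mem, ConjAct.smul_def,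
    map_inv, ConjAct.ofConjAct_toConjAct, inv_inv, MonoidHom.coe_coe]
  constructor
  · rintro ⟨y, hy, rfl⟩
    refine ⟨g⁻¹ * y * g, hy, ?_⟩
    simp [map_mul, mul_assoc]
  · rintro ⟨y, hy, hyx⟩
    refine ⟨g * y * g⁻¹, by simpa [mul_assoc] using hy, ?_⟩
    rw [map_mul, map_mul, hyx, map_inv]; group

lemma image_orbit (H : Subgroup G) :
    (Subgroup.map (f : G →* G')) '' (orbit (ConjAct G) H) =
      orbit (ConjAct G') (H.map (f : G →* G')) := by
  ext T
  constructor
  · rintro ⟨T', hT', rfl⟩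
    obtain ⟨g, rfl⟩ := (mem_orbit_iff'' H T').mp hT'
    rw [map_conjAct_smul]
    exact MulAction.mem_orbit _ _
  · intro hT
    obtain ⟨g', hg'⟩ := (mem_orbit_iff'' _ T).mp hT
    refine ⟨ConjAct.toConjAct (f.symm g') • H, MulAction.mem_orbit _ _, ?_⟩
    rw [map_conjAct_smul, MulEquiv.apply_symm_apply, hg']

end Transport

noncomputable def subE : Subgroup InfDihedral ≃ Subgroup DG where
  toFun H := H.map (DtoI.E : InfDihedral →* DG)
  invFun H := H.map (DtoI.E.symm : DG →* InfDihedral)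
  left_inv H := by
    show (H.map (DtoI.E : InfDihedral →* DG)).map (DtoI.E.symm : DG →* InfDihedral) = H
    rw [Subgroup.map_map]
    have : (DtoI.E.symm : DG →* InfDihedral).comp (DtoI.E : InfDihedral →* DG) =
        MonoidHom.id _ := MonoidHom.ext fun x => DtoI.E.symm_apply_apply x
    rw [this, Subgroup.map_id]
  right_inv H := by
    show (H.map (DtoI.E.symm : DG →* InfDihedral)).map (DtoI.E : InfDihedral →* DG) = H
    rw [Subgroup.map_map]
    have : (DtoI.E : InfDihedral →* DG).comp (DtoI.E.symm : DG →* InfDihedral) =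
        MonoidHom.id _ := MonoidHom.ext fun x => DtoI.E.apply_symm_apply x
    rw [this, Subgroup.map_id]

noncomputable def setE : Set (Subgroup InfDihedral) ≃ Set (Subgroup DG) where
  toFun S := subE '' S
  invFun S := subE.symm '' S
  left_inv S := by simp [Set.image_image]
  right_inv S := by simp [Set.image_image]

theorem count_dihedral_subgroups_of_index_le' (k : ℕ) (hk : 0 < k) :
    Nat.card {S : Set (Subgroup InfDihedral) //
        ∃ H : Subgroup InfDihedral,
          Nonempty (H ≃* InfDihedral) ∧ H.index ≠ 0 ∧ H.index ≤ k ∧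
          S = MulAction.orbit (ConjAct InfDihedral) H} = 3 * k / 2 := by
  have hiff : ∀ S : Set (Subgroup InfDihedral),
      (∃ H : Subgroup InfDihedral,
          Nonempty (H ≃* InfDihedral) ∧ H.index ≠ 0 ∧ H.index ≤ k ∧
          S = MulAction.orbit (ConjAct InfDihedral) H) ↔
      (∃ H' : Subgroup DG,
          Nonempty (H' ≃* DG) ∧ H'.index ≠ 0 ∧ H'.index ≤ k ∧
          setE S = MulAction.orbit (ConjAct DG) H') := by
    intro S
    constructor
    · rintro ⟨H, ⟨e⟩, h1, h2, rfl⟩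
      refine ⟨H.map (DtoI.E : InfDihedral →* DG),
        ⟨((MulEquiv.subgroupMap DtoI.E H).symm.trans e).trans DtoI.E⟩, ?_, ?_, ?_⟩
      · rwa [index_map_equiv]
      · rwa [index_map_equiv]
      · exact image_orbit DtoI.E H
    · rintro ⟨H', ⟨e'⟩, h1, h2, hS⟩
      refine ⟨H'.map (DtoI.E.symm : DG →* InfDihedral),
        ⟨((MulEquiv.subgroupMap DtoI.E.symm H').symm.trans e').trans DtoI.E.symm⟩, ?_, ?_, ?_⟩
      · rwa [index_map_equiv]
      · rwa [index_map_equiv]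
      · have h3 : S = setE.symm (setE S) := (setE.symm_apply_apply S).symm
        rw [h3, hS]
        exact image_orbit DtoI.E.symm H'
  rw [Nat.card_congr (Equiv.subtypeEquiv (q := fun S' => ∃ H' : Subgroup DG,
      Nonempty (H' ≃* DG) ∧ H'.index ≠ 0 ∧ H'.index ≤ k ∧
      S' = MulAction.orbit (ConjAct DG) H') setE hiff)]
  exact DG.countD k

/-- For every positive integer `k`, the infinite dihedral group contains exactly `⌊3k/2⌋`
conjugacy classes of subgroups isomorphic to itself and of index at most `k`. -/
theorem count_dihedral_subgroups_of_index_le (k : ℕ) (hk : 0 < k) :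
    Nat.card {S : Set (Subgroup InfDihedral) //
        ∃ H : Subgroup InfDihedral,
          Nonempty (H ≃* InfDihedral) ∧ H.index ≠ 0 ∧ H.index ≤ k ∧
          S = MulAction.orbit (ConjAct InfDihedral) H} = 3 * k / 2 :=
  count_dihedral_subgroups_of_index_le' k hk
end

section
/- A finitely generated group G has only finitely many conjugacy classes of involutions, provided G is virtually free (e.g., a finitely generated Fuchsian group); in particular, the quotient of the set of involutions by the conjugation action is finite. -/
namespace VFAux

open FreeGroup List

variable {α : Type*} [DecidableEq α]

/-- The no-cancellation relation on letters. -/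
def NR (a b : α × Bool) : Prop := ¬(a.1 = b.1 ∧ a.2 = !b.2)

theorem reduce_eq_self_of_chain : ∀ {L : List (α × Bool)}, List.Chain' NR L → reduce L = L := by
  intro L
  induction L with
  | nil => simp
  | cons x L ih =>
    intro h
    have hL : List.Chain' NR L := h.tail
    rw [FreeGroup.reduce.cons, ih hL]
    cases L with
    | nil => rfl
    | cons y T =>
      have hxy : NR x y := (List.isChain_cons_cons.mp h).1
      simp only [NR] at hxy
      simp [hxy]

theorem chain_of_reduce_eq_self : ∀ {L : List (α × Bool)}, reduce L = L → List.Chain' NR L := by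
  intro L
  induction L with
  | nil => intro _; exact List.isChain_nil
  | cons x L ih =>
    intro h
    rw [FreeGroup.reduce.cons] at h
    rcases hL : reduce L with _ | ⟨y, T⟩
    · rw [hL] at h
      simp only at h
      have hL0 : [] = L := by injection h
      subst hL0; exact List.isChain_singleton x
    · rw [hL] at h
      simp only at h
      by_cases hc : x.1 = y.1 ∧ x.2 = !y.2
      · rw [if_pos hc] at h
        exfalso
        have h1 := congrArg List.length h
        have hlen := FreeGroup.Red.length_le (FreeGroup.reduce.red (L := L))
        rw [hL] at hlen
        simp at h1 hlen
        omega
      · rw [if_neg hc] at h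
        have hLyT : y :: T = L := by injection h
        have hch : List.Chain' NR L := ih (hLyT ▸ hL)
        rw [← hLyT] at hch ⊢
        exact List.isChain_cons_cons.mpr ⟨hc, hch⟩

theorem reduce_infix {L L' : List (α × Bool)} (h : reduce L = L) (h' : L' <:+: L) :
    reduce L' = L' :=
  reduce_eq_self_of_chain ((chain_of_reduce_eq_self h).infix h')

theorem reduce_toWord_take (x : FreeGroup α) (k : ℕ) :
    reduce (x.toWord.take k) = x.toWord.take k :=
  reduce_infix x.reduce_toWord (List.take_prefix _ _).isInfix

theorem reduce_toWord_drop (x : FreeGroup α) (k : ℕ) :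
    reduce (x.toWord.drop k) = x.toWord.drop k :=
  reduce_infix x.reduce_toWord (List.drop_suffix _ _).isInfix

/-- The junction (cancellation) lemma: multiplying two reduced words, all cancellation
happens in a maximal cancelling block `w` at the junction. -/
theorem junction : ∀ (L₁ : List (α × Bool)), reduce L₁ = L₁ → ∀ (L₂ : List (α × Bool)),
    reduce L₂ = L₂ →
    ∃ A w B, L₁ = A ++ w ∧ L₂ = invRev w ++ B ∧ reduce (L₁ ++ L₂) = A ++ B := by
  intro L₁
  induction L₁ using List.reverseRecOn with
  | nil =>
    intro _ L₂ h₂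
    exact ⟨[], [], L₂, by simp [invRev], by simp [invRev], by simpa using h₂⟩
  | append_singleton M x ih =>
    intro h₁ L₂ h₂
    have hM : reduce M = M := reduce_infix h₁ (List.prefix_append M [x]).isInfix
    rcases L₂ with _ | ⟨y, T⟩
    · exact ⟨M ++ [x], [], [], by simp [invRev], by simp [invRev], by simpa using h₁⟩
    · have hT : reduce T = T := reduce_infix h₂ (List.suffix_cons y T).isInfix
      by_cases hc : y.1 = x.1 ∧ y.2 = !x.2
      · -- cancellation at the junction
        have hy : y = (x.1, !x.2) := Prod.ext hc.1 hc.2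
        obtain ⟨A, w, B, e1, e2, e3⟩ := ih hM T hT
        refine ⟨A, w ++ [x], B, by rw [e1]; simp, ?_, ?_⟩
        · rw [hy, e2]
          simp [invRev]
        · have hstep : FreeGroup.Red.Step ((M ++ [x]) ++ (y :: T)) (M ++ T) := by
            have : (M ++ [x]) ++ (y :: T) = M ++ (x.1, x.2) :: (x.1, !x.2) :: T := by
              rw [hy]; simp
            rw [this]
            exact FreeGroup.Red.Step.not
          rw [FreeGroup.reduce.Step.eq hstep, e3]
      · -- no cancellation: everything is reduced
        refine ⟨M ++ [x], [], y :: T, by simp [invRev], by simp [invRev], ?_⟩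
        apply reduce_eq_self_of_chain
        rw [List.append_assoc]
        refine (List.isChain_append (l₁ := M) (l₂ := [x] ++ (y :: T))).mpr ⟨?_, ?_, ?_⟩
        · exact (chain_of_reduce_eq_self hM)
        · refine List.isChain_cons_cons.mpr ⟨?_, chain_of_reduce_eq_self h₂⟩
          intro ⟨e1, e2⟩
          exact hc ⟨e1.symm, by simp [e2]⟩
        · intro a ha b hb
          have hch := chain_of_reduce_eq_self h₁
          replace hch := (List.isChain_append (l₁ := M) (l₂ := [x])).mp hch
          have hb' : x = b := by simpa using hb
          exact hch.2.2 a ha b (by simp [← hb'])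
  
theorem norm_toWord (x : FreeGroup α) : x.norm = x.toWord.length := rfl

/-- Cancelling a prefix of a reduced word. -/
theorem norm_prefix_cancel (x : FreeGroup α) (k : ℕ) (hk : k ≤ x.toWord.length) :
    FreeGroup.norm ((FreeGroup.mk (x.toWord.take k))⁻¹ * x) + k = FreeGroup.norm x := by
  have hx0 : x = FreeGroup.mk (x.toWord.take k) * FreeGroup.mk (x.toWord.drop k) := by
    rw [FreeGroup.mul_mk, List.take_append_drop, FreeGroup.mk_toWord]
  have hx : (FreeGroup.mk (x.toWord.take k))⁻¹ * x = FreeGroup.mk (x.toWord.drop k) := by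
    nth_rewrite 2 [hx0]
    rw [inv_mul_cancel_left]
  rw [hx, norm_toWord, FreeGroup.toWord_mk, reduce_toWord_drop, List.length_drop, norm_toWord]
  omega

lemma invRev_append (A w : List (α × Bool)) :
    FreeGroup.invRev (A ++ w) = FreeGroup.invRev w ++ FreeGroup.invRev A := by
  simp [FreeGroup.invRev]

/-- Separation: if the `k`-prefix of `x` is not a prefix of `v`, then the distance from
`x` to `v` is at least `norm x + 1 - k`. -/
theorem sep (x v : FreeGroup α) (k : ℕ)
    (hnot : ¬ (v.toWord.take k = x.toWord.take k ∧ k ≤ v.toWord.length)) :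
    FreeGroup.norm x + 1 ≤ FreeGroup.norm (x⁻¹ * v) + k := by
  obtain ⟨A, w, B, e1, e2, e3⟩ := junction (FreeGroup.invRev x.toWord)
    (by rw [FreeGroup.reduce_invRev, FreeGroup.reduce_toWord]) v.toWord v.reduce_toWord
  have hxv : (x⁻¹ * v).toWord = A ++ B := by
    conv_lhs => rw [← FreeGroup.mk_toWord (x := x), ← FreeGroup.mk_toWord (x := v),
      FreeGroup.inv_mk, FreeGroup.mul_mk]
    rw [FreeGroup.toWord_mk, e3]
  have hxw : x.toWord = FreeGroup.invRev w ++ FreeGroup.invRev A := by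
    have := congrArg FreeGroup.invRev e1
    rwa [FreeGroup.invRev_invRev, invRev_append] at this
  have hwk : w.length < k := by
    by_contra hge
    push_neg at hge
    apply hnot
    have hlw : k ≤ (FreeGroup.invRev w).length := by rw [FreeGroup.invRev_length]; omega
    constructor
    · rw [e2, hxw, List.take_append_of_le_length hlw, List.take_append_of_le_length hlw]
    · rw [e2, List.length_append, FreeGroup.invRev_length]
      omega
  have l1 : x.toWord.length = w.length + A.length := by
    rw [hxw, List.length_append, FreeGroup.invRev_length, FreeGroup.invRev_length]
  have l2 : (x⁻¹ * v).toWord.length = A.length + B.length := by rw [hxv, List.length_append]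
  rw [norm_toWord, norm_toWord, l1, l2]
  omega

theorem norm_triangle (x v : FreeGroup α) :
    FreeGroup.norm v ≤ FreeGroup.norm x + FreeGroup.norm (x⁻¹ * v) := by
  calc FreeGroup.norm v = FreeGroup.norm (x * (x⁻¹ * v)) := by group
  _ ≤ _ := FreeGroup.norm_mul_le _ _

theorem mk_nil_eq_one : (FreeGroup.mk ([] : List (α × Bool))) = 1 := by
  have : (FreeGroup.mk ([] : List (α × Bool))).toWord = [] := by
    simp [FreeGroup.toWord_mk]
  exact FreeGroup.toWord_eq_nil_iff.mp this

theorem mk_single_true (a : α) : FreeGroup.mk [(a, true)] = FreeGroup.of a := rfl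

theorem mk_single_false (a : α) : FreeGroup.mk [(a, false)] = (FreeGroup.of a)⁻¹ := by
  rw [← mk_single_true, FreeGroup.inv_mk]
  rfl

/-- A monoid hom of free groups is Lipschitz with constant the max norm of generator images. -/
theorem lipschitz (A : FreeGroup α →* FreeGroup α) (L : ℕ)
    (h : ∀ i, FreeGroup.norm (A (FreeGroup.of i)) ≤ L) (x : FreeGroup α) :
    FreeGroup.norm (A x) ≤ L * FreeGroup.norm x := by
  suffices H : ∀ l : List (α × Bool), FreeGroup.norm (A (FreeGroup.mk l)) ≤ L * l.length by
    calc FreeGroup.norm (A x) = FreeGroup.norm (A (FreeGroup.mk x.toWord)) := by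
          rw [FreeGroup.mk_toWord]
    _ ≤ L * x.toWord.length := H _
    _ = L * FreeGroup.norm x := by rw [norm_toWord]
  intro l
  induction l with
  | nil => rw [mk_nil_eq_one, _root_.map_one, FreeGroup.norm_one]; simp
  | cons p l ih =>
    obtain ⟨a, b⟩ := p
    have hsplit : FreeGroup.mk ((a, b) :: l) = FreeGroup.mk [(a, b)] * FreeGroup.mk l := by
      rw [FreeGroup.mul_mk]; rfl
    have hgen : FreeGroup.norm (A (FreeGroup.mk [(a, b)])) ≤ L := by
      cases b
      · rw [mk_single_false, _root_.map_inv, FreeGroup.norm_inv_eq]; exact h a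
      · rw [mk_single_true]; exact h a
    calc FreeGroup.norm (A (FreeGroup.mk ((a, b) :: l)))
        ≤ FreeGroup.norm (A (FreeGroup.mk [(a, b)])) + FreeGroup.norm (A (FreeGroup.mk l)) := by
          rw [hsplit, _root_.map_mul]; exact FreeGroup.norm_mul_le _ _
    _ ≤ L + L * l.length := add_le_add hgen ih
    _ = L * ((a, b) :: l).length := by rw [List.length_cons]; ring

theorem ball_finite [Finite α] (C : ℕ) : {x : FreeGroup α | FreeGroup.norm x ≤ C}.Finite := by
  have h : {x : FreeGroup α | FreeGroup.norm x ≤ C}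
      ⊆ FreeGroup.toWord ⁻¹' {l : List (α × Bool) | l.length ≤ C} := fun x hx => hx
  exact ((List.finite_length_le (α × Bool) C).preimage
    FreeGroup.toWord_injective.injOn).subset h

open Classical in
/-- Key lemma: for an involutive endomorphism `A` of a finitely generated free group,
every `b` with `A b * b = 1` is twisted-conjugate to an element of uniformly bounded norm. -/
theorem key_lemma [Finite α] (A : FreeGroup α →* FreeGroup α) (hA : ∀ v, A (A v) = v) :
    ∃ C : ℕ, ∀ b : FreeGroup α, A b * b = 1 →
      ∃ z : FreeGroup α, FreeGroup.norm (z⁻¹ * b * A z) ≤ C := by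
  cases nonempty_fintype α
  set L : ℕ := 1 + Finset.univ.sup (fun i : α => FreeGroup.norm (A (FreeGroup.of i))) with hLdef
  have hgen : ∀ i, FreeGroup.norm (A (FreeGroup.of i)) ≤ L := by
    intro i
    have h1 : FreeGroup.norm (A (FreeGroup.of i))
        ≤ Finset.univ.sup (fun i : α => FreeGroup.norm (A (FreeGroup.of i))) :=
      Finset.le_sup (f := fun i : α => FreeGroup.norm (A (FreeGroup.of i)))
        (Finset.mem_univ i)
    omega
  have hL1 : 1 ≤ L := by omega
  have hLip : ∀ x, FreeGroup.norm (A x) ≤ L * FreeGroup.norm x := lipschitz A L hgen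
  refine ⟨2 * L * L + L, ?_⟩
  intro b hb
  have hAb : A b = b⁻¹ := eq_inv_of_mul_eq_one_left hb
  set w := b.toWord with hw
  set n := w.length with hn
  have hnb : FreeGroup.norm b = n := rfl
  have hnw : b.toWord.length = n := rfl
  set γ : ℕ → FreeGroup α := fun j => FreeGroup.mk (w.take j) with hγ
  set z : ℕ → FreeGroup α := fun j => A (b⁻¹ * γ j) with hz
  have hγ0 : γ 0 = 1 := by simp only [hγ, List.take_zero]; exact mk_nil_eq_one
  have hγn : γ n = b := by
    simp only [hγ, hn, List.take_length]
    exact FreeGroup.mk_toWord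
  have hz0 : z 0 = b := by
    simp only [hz, hγ0, mul_one, _root_.map_inv, hAb, inv_inv]
  have hzn : z n = 1 := by
    simp only [hz, hγn, inv_mul_cancel, _root_.map_one]
  have hphi : ∀ u, A (b⁻¹ * A (b⁻¹ * u)) = u := by
    intro u
    rw [show A (b⁻¹ * A (b⁻¹ * u)) = A b⁻¹ * A (A (b⁻¹ * u)) from _root_.map_mul A _ _,
      hA, _root_.map_inv, hAb, inv_inv, mul_inv_cancel_left]
  have hdist : ∀ u v, (A (b⁻¹ * u))⁻¹ * A (b⁻¹ * v) = A (u⁻¹ * v) := by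
    intro u v
    rw [← _root_.map_inv, ← _root_.map_mul, mul_inv_rev, inv_inv, mul_assoc, ← mul_assoc b,
      mul_inv_cancel, one_mul]
  have hγz : ∀ j, A (b⁻¹ * z j) = γ j := fun j => hphi (γ j)
  have hγstep : ∀ i j, i ≤ j → FreeGroup.norm ((γ i)⁻¹ * γ j) ≤ j - i := by
    intro i j hij
    have h1 : γ j = γ i * FreeGroup.mk ((w.take j).drop i) := by
      simp only [hγ]
      rw [FreeGroup.mul_mk]
      congr 1
      have e : w.take i = (w.take j).take i := by
        rw [List.take_take]
        congr 1
        omega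
      rw [e, List.take_append_drop]
    have h2 : (γ i)⁻¹ * γ j = FreeGroup.mk ((w.take j).drop i) := by
      rw [h1, inv_mul_cancel_left]
    rw [h2]
    calc FreeGroup.norm (FreeGroup.mk ((w.take j).drop i)) ≤ ((w.take j).drop i).length :=
          FreeGroup.norm_mk_le
    _ ≤ j - i := by
        rw [List.length_drop, List.length_take]
        omega
  have hγsymm : ∀ i j, FreeGroup.norm ((γ i)⁻¹ * γ j) = FreeGroup.norm ((γ j)⁻¹ * γ i) := by
    intro i j
    rw [← FreeGroup.norm_inv_eq, mul_inv_rev, inv_inv]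
  have hzdist : ∀ i j, FreeGroup.norm ((z i)⁻¹ * z j) ≤ L * FreeGroup.norm ((γ i)⁻¹ * γ j) := by
    intro i j
    simp only [hz]
    rw [hdist]
    exact hLip _
  -- the crossing lemma
  have cross : ∀ k, k ≤ n → ∃ j, j ≤ n ∧ FreeGroup.norm ((z j)⁻¹ * γ k) ≤ L := by
    intro k hk
    rcases Nat.eq_zero_or_pos k with hk0 | hk1
    · refine ⟨n, le_rfl, ?_⟩
      rw [hk0, hγ0, hzn, inv_one, one_mul, FreeGroup.norm_one]
      omega
    · set P : ℕ → Prop := fun j => ((z j).toWord.take k = w.take k ∧ k ≤ (z j).toWord.length)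
        with hP
      have hP0 : P 0 := by
        constructor
        · rw [hz0]
        · rw [hz0]; exact hk
      have hPn : ¬ P n := by
        rw [hP]
        simp only [hzn, FreeGroup.toWord_one, List.length_nil]
        rintro ⟨-, h2⟩
        omega
      have hex : ∃ j, ¬ P j := ⟨n, hPn⟩
      set j₀ := Nat.find hex with hj₀
      have hj₀n : j₀ ≤ n := Nat.find_min' hex hPn
      have hj₀pos : 0 < j₀ := by
        rcases Nat.eq_zero_or_pos j₀ with h | h
        · exfalso
          have hs : ¬ P j₀ := Nat.find_spec hex
          rw [h] at hs
          exact hs hP0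
        · exact h
      set j := j₀ - 1 with hj
      have hPj : P j := by
        by_contra hc
        have : j₀ ≤ j := Nat.find_min' hex hc
        omega
      have hnPj1 : ¬ P (j + 1) := by
        have : j + 1 = j₀ := by omega
        rw [this]
        exact Nat.find_spec hex
      -- separation
      have hsep := sep (z j) (z (j + 1)) k ?_
      · have hstep : FreeGroup.norm ((z j)⁻¹ * z (j + 1)) ≤ L := by
          calc FreeGroup.norm ((z j)⁻¹ * z (j + 1))
              ≤ L * FreeGroup.norm ((γ j)⁻¹ * γ (j + 1)) := hzdist _ _
          _ ≤ L * 1 := Nat.mul_le_mul_left L (by simpa using hγstep j (j + 1) (by omega))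
          _ = L := mul_one L
        have hpref := norm_prefix_cancel (z j) k hPj.2
        have hγk : FreeGroup.mk ((z j).toWord.take k) = γ k := by rw [hPj.1]
        rw [hγk] at hpref
        refine ⟨j, by omega, ?_⟩
        have : FreeGroup.norm ((z j)⁻¹ * γ k) = FreeGroup.norm ((γ k)⁻¹ * z j) := by
          rw [← FreeGroup.norm_inv_eq, mul_inv_rev, inv_inv]
        rw [this]
        omega
      · intro hcon
        apply hnPj1
        refine ⟨?_, hcon.2⟩
        rw [hcon.1, hPj.1]
  -- the flipped crossing lemma
  have flip : ∀ k, k ≤ n → ∃ j, j ≤ n ∧ FreeGroup.norm ((γ j)⁻¹ * z k) ≤ L * L := by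
    intro k hk
    obtain ⟨j, hjn, hj⟩ := cross k hk
    refine ⟨j, hjn, ?_⟩
    have : (γ j)⁻¹ * z k = A ((z j)⁻¹ * γ k) := by
      rw [← hdist, hγz]
    rw [this]
    calc FreeGroup.norm (A ((z j)⁻¹ * γ k)) ≤ L * FreeGroup.norm ((z j)⁻¹ * γ k) := hLip _
    _ ≤ L * L := Nat.mul_le_mul_left L hj
  -- the endgame
  have hexQ : ∃ k, FreeGroup.norm (z k) ≤ k := ⟨n, by rw [hzn, FreeGroup.norm_one]; omega⟩
  set k₀ := Nat.find hexQ with hk₀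
  have hQ : FreeGroup.norm (z k₀) ≤ k₀ := Nat.find_spec hexQ
  have hk₀n : k₀ ≤ n := Nat.find_min' hexQ (by rw [hzn, FreeGroup.norm_one]; omega)
  rcases Nat.eq_zero_or_pos k₀ with hk00 | hk0pos
  · -- n = 0, b = 1
    have hb0 : FreeGroup.norm b = 0 := by
      rw [hk00, hz0] at hQ
      rw [hnb]
      omega
    refine ⟨1, ?_⟩
    rw [inv_one, one_mul, _root_.map_one, mul_one]
    omega
  · have hnQ : k₀ ≤ FreeGroup.norm (z (k₀ - 1)) := by
      have := Nat.find_min hexQ (m := k₀ - 1) (by omega)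
      omega
    have hlow : k₀ ≤ FreeGroup.norm (z k₀) + L := by
      have htri := norm_triangle (z k₀) (z (k₀ - 1))
      have hstep : FreeGroup.norm ((z k₀)⁻¹ * z (k₀ - 1)) ≤ L := by
        calc FreeGroup.norm ((z k₀)⁻¹ * z (k₀ - 1))
            ≤ L * FreeGroup.norm ((γ k₀)⁻¹ * γ (k₀ - 1)) := hzdist _ _
        _ ≤ L * 1 := Nat.mul_le_mul_left L (by
              have h := hγstep (k₀ - 1) k₀ (by omega)
              rw [hγsymm]
              omega)
        _ = L := mul_one L
      omega
    obtain ⟨j, hjn, hflip⟩ := flip k₀ hk₀n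
    have hγjnorm : FreeGroup.norm (γ j) = j := by
      rw [norm_toWord]
      simp only [hγ]
      rw [FreeGroup.toWord_mk, reduce_toWord_take, List.length_take]
      omega
    have hγknorm : FreeGroup.norm (γ k₀) = k₀ := by
      rw [norm_toWord]
      simp only [hγ]
      rw [FreeGroup.toWord_mk, reduce_toWord_take, List.length_take]
      omega
    -- |j - norm (z k₀)| ≤ L * L
    have htri1 := norm_triangle (γ j) (z k₀)
    have htri2 := norm_triangle (z k₀) (γ j)
    have hflip' : FreeGroup.norm ((z k₀)⁻¹ * γ j) ≤ L * L := by
      rw [← FreeGroup.norm_inv_eq, mul_inv_rev, inv_inv]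
      exact hflip
    -- final bound
    refine ⟨γ k₀, ?_⟩
    have hzk : z k₀ = b * A (γ k₀) := by
      simp only [hz]
      rw [_root_.map_mul, _root_.map_inv, hAb, inv_inv]
    have hfin : (γ k₀)⁻¹ * b * A (γ k₀) = (γ k₀)⁻¹ * z k₀ := by
      rw [hzk, mul_assoc]
    rw [hfin]
    have htri3 : FreeGroup.norm ((γ k₀)⁻¹ * z k₀)
        ≤ FreeGroup.norm ((γ k₀)⁻¹ * γ j) + FreeGroup.norm ((γ j)⁻¹ * z k₀) := by
      have : (γ k₀)⁻¹ * z k₀ = ((γ k₀)⁻¹ * γ j) * ((γ j)⁻¹ * z k₀) := by group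
      rw [this]
      exact FreeGroup.norm_mul_le _ _
    have hjk : FreeGroup.norm ((γ k₀)⁻¹ * γ j) ≤ L + L * L := by
      rcases le_total k₀ j with h | h
      · have := hγstep k₀ j h
        have hjle : j ≤ FreeGroup.norm (z k₀) + L * L := by
          rw [← hγjnorm]
          calc FreeGroup.norm (γ j) ≤ FreeGroup.norm (z k₀)
              + FreeGroup.norm ((z k₀)⁻¹ * γ j) := htri2
          _ ≤ FreeGroup.norm (z k₀) + L * L := by omega
        omega
      · have := hγsymm k₀ j ▸ hγstep j k₀ h
        have hkle : FreeGroup.norm (z k₀) ≤ j + L * L := by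
          calc FreeGroup.norm (z k₀) ≤ FreeGroup.norm (γ j)
              + FreeGroup.norm ((γ j)⁻¹ * z k₀) := htri1
          _ ≤ j + L * L := by rw [hγjnorm]; omega
        have h2 := hγstep j k₀ h
        have h3 : FreeGroup.norm ((γ k₀)⁻¹ * γ j) ≤ k₀ - j := by rw [hγsymm]; exact h2
        omega
    calc FreeGroup.norm ((γ k₀)⁻¹ * z k₀)
        ≤ FreeGroup.norm ((γ k₀)⁻¹ * γ j) + FreeGroup.norm ((γ j)⁻¹ * z k₀) := htri3
    _ ≤ (L + L * L) + L * L := by omega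
    _ ≤ 2 * L * L + L := by ring_nf; omega

/-- A finitely generated free group has a finite basis. -/
theorem finite_of_fg_freeGroup {κ : Type*} (h : Group.FG (FreeGroup κ)) : Finite κ := by
  classical
  obtain ⟨S, hScl, hSfin⟩ := Group.fg_iff.mp h
  set K : Set κ := ⋃ s ∈ S, {a : κ | ∃ b, (a, b) ∈ FreeGroup.toWord s} with hK
  have hKfin : K.Finite := by
    refine hSfin.biUnion fun s _ => ?_
    have he : {a : κ | ∃ b, (a, b) ∈ FreeGroup.toWord s}
        = Prod.fst '' {p | p ∈ FreeGroup.toWord s} := by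
      ext a
      constructor
      · rintro ⟨b, hb⟩
        exact ⟨(a, b), hb, rfl⟩
      · rintro ⟨⟨a', b⟩, hb, rfl⟩
        exact ⟨b, hb⟩
    rw [he]
    exact ((FreeGroup.toWord s).finite_toSet).image _
  set W : Subgroup (FreeGroup κ) :=
    { carrier := {x | ∀ p ∈ FreeGroup.toWord x, p.1 ∈ K}
      one_mem' := by
        intro p hp
        rw [FreeGroup.toWord_one] at hp
        exact absurd hp (List.not_mem_nil (a := p))
      mul_mem' := by
        intro x y hx hy p hp
        have := (FreeGroup.toWord_mul_sublist x y).subset hp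
        rcases List.mem_append.mp this with h | h
        · exact hx p h
        · exact hy p h
      inv_mem' := by
        intro x hx p hp
        rw [FreeGroup.toWord_inv] at hp
        simp only [FreeGroup.invRev, List.mem_reverse, List.mem_map] at hp
        obtain ⟨q, hq, rfl⟩ := hp
        exact hx q hq } with hW
  have hSW : S ⊆ (W : Set (FreeGroup κ)) := by
    intro s hs p hp
    exact Set.mem_biUnion hs ⟨p.2, hp⟩
  have hWtop : (⊤ : Subgroup (FreeGroup κ)) ≤ W := by
    rw [← hScl]
    exact (Subgroup.closure_le W).mpr hSW
  have hall : ∀ a : κ, a ∈ K := by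
    intro a
    have := hWtop (Subgroup.mem_top (FreeGroup.of a))
    have h2 := this (a, true) (by rw [FreeGroup.toWord_of]; exact List.mem_singleton.mpr rfl)
    exact h2
  have : (Set.univ : Set κ).Finite := hKfin.subset (fun a _ => hall a)
  exact Set.finite_univ_iff.mp this

end VFAux

/-- A finitely generated virtually free group (for instance a finitely generated
Fuchsian group) has only finitely many conjugacy classes of involutions. -/
theorem finitely_many_conj_classes_of_involutions {G : Type*} [Group G]
    (hfg : Group.FG G)
    (hvf : ∃ H : Subgroup G, H.index ≠ 0 ∧ ∃ ι : Type, Nonempty (H ≃* FreeGroup ι)) :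
    Set.Finite (ConjClasses.mk '' {g : G | orderOf g = 2}) := by
  classical
  obtain ⟨H, hHindex, ι, ⟨e⟩⟩ := hvf
  haveI : H.FiniteIndex := ⟨hHindex⟩
  set N : Subgroup G := H.normalCore with hNdef
  haveI hNnorm : N.Normal := Subgroup.normalCore_normal H
  haveI : N.FiniteIndex := Subgroup.finiteIndex_normalCore H
  -- `N` is a free group by Nielsen–Schreier
  haveI : IsFreeGroup N := by
    have e1 : N.subgroupOf H ≃* N := Subgroup.subgroupOfEquivOfLe (Subgroup.normalCore_le H)
    have e2 : N.subgroupOf H ≃* (N.subgroupOf H).map (e : H →* FreeGroup ι) :=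
      MulEquiv.subgroupMap e (N.subgroupOf H)
    exact IsFreeGroup.ofMulEquiv (e2.symm.trans e1)
  -- `N` is finitely generated by Schreier's lemma
  haveI : Group.FG G := hfg
  haveI hNfg : Group.FG N := Subgroup.fg_of_index_ne_zero N
  set κ := IsFreeGroup.Generators N with hκ
  set β : N ≃* FreeGroup κ := IsFreeGroup.toFreeGroup N with hβ
  haveI : Finite κ :=
    VFAux.finite_of_fg_freeGroup (Group.fg_of_surjective (f := β.toMonoidHom) β.surjective)
  -- the per-coset lemma
  have coset : ∀ g₀ : G, orderOf g₀ = 2 → ∃ T : Set G, T.Finite ∧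
      ∀ g : G, orderOf g = 2 → g₀⁻¹ * g ∈ N → ∃ t ∈ T, IsConj g t := by
    intro g₀ hg₀
    have hg₀sq : g₀ * g₀ = 1 := by
      have := pow_orderOf_eq_one g₀
      rwa [hg₀, pow_two] at this
    have hg₀inv : g₀⁻¹ = g₀ := inv_eq_of_mul_eq_one_right hg₀sq
    -- conjugation by `g₀` as a monoid hom of `N`
    set c : N →* N :=
      { toFun := fun x => ⟨g₀ * (x : G) * g₀⁻¹, hNnorm.conj_mem (x : G) x.2 g₀⟩
        map_one' := by
          ext
          simp
        map_mul' := by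
          intro x y
          ext
          push_cast
          group } with hc
    have hcc : ∀ x : N, c (c x) = x := by
      intro x
      ext
      simp only [hc, MonoidHom.coe_mk, OneHom.coe_mk]
      rw [hg₀inv]
      calc g₀ * (g₀ * (x : G) * g₀) * g₀ = (g₀ * g₀) * (x : G) * (g₀ * g₀) := by group
      _ = (x : G) := by rw [hg₀sq, one_mul, mul_one]
    set A : FreeGroup κ →* FreeGroup κ :=
      (β.toMonoidHom.comp c).comp β.symm.toMonoidHom with hA
    have hsymmA : ∀ v, β.symm (A v) = c (β.symm v) := by
      intro v
      simp only [hA, MonoidHom.comp_apply, MulEquiv.coe_toMonoidHom]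
      rw [MulEquiv.symm_apply_apply]
    have hAA : ∀ v, A (A v) = v := by
      intro v
      simp only [hA, MonoidHom.comp_apply, MulEquiv.coe_toMonoidHom]
      rw [MulEquiv.symm_apply_apply, hcc, MulEquiv.apply_symm_apply]
    obtain ⟨C, hC⟩ := VFAux.key_lemma A hAA
    refine ⟨(fun w => g₀ * ((β.symm w : N) : G)) '' {w | FreeGroup.norm w ≤ C},
      (VFAux.ball_finite C).image _, ?_⟩
    intro g hg hmem
    have hgsq : g * g = 1 := by
      have := pow_orderOf_eq_one g
      rwa [hg, pow_two] at this
    set a : N := ⟨g₀⁻¹ * g, hmem⟩ with ha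
    have hca : c a * a = 1 := by
      ext
      push_cast
      simp only [hc, MonoidHom.coe_mk, OneHom.coe_mk, ha]
      rw [hg₀inv]
      calc g₀ * (g₀ * g) * g₀ * (g₀ * g) = (g₀ * g₀) * (g * ((g₀ * g₀) * g)) := by group
      _ = 1 := by rw [hg₀sq]; simp [hgsq]
    have hb : A (β a) * (β a) = 1 := by
      have : A (β a) = β (c a) := by
        simp only [hA, MonoidHom.comp_apply, MulEquiv.coe_toMonoidHom]
        rw [MulEquiv.symm_apply_apply]
      rw [this, ← map_mul, hca, map_one]
    obtain ⟨zz, hzz⟩ := hC (β a) hb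
    refine ⟨g₀ * ((β.symm (zz⁻¹ * β a * A zz) : N) : G), ⟨_, hzz, rfl⟩, ?_⟩
    rw [isConj_iff]
    set Z : G := ((β.symm zz : N) : G) with hZ
    refine ⟨g₀ * Z⁻¹ * g₀, ?_⟩
    have hR : ((β.symm (zz⁻¹ * β a * A zz) : N) : G) = Z⁻¹ * (g₀⁻¹ * g) * (g₀ * Z * g₀⁻¹) := by
      rw [map_mul, map_mul, map_inv, MulEquiv.symm_apply_apply, hsymmA]
      push_cast
      simp only [hc, MonoidHom.coe_mk, OneHom.coe_mk, ha, hZ]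
    rw [hR]
    simp only [mul_inv_rev, inv_inv, hg₀inv]
    group
  -- assemble over the finitely many cosets
  choose! T hTfin hTspec using coset
  haveI : Finite (G ⧸ N) := N.finite_quotient_of_finiteIndex
  set S : G ⧸ N → Set G := fun q =>
    if h : ∃ g₀ : G, orderOf g₀ = 2 ∧ ((g₀ : G ⧸ N) = q) then T h.choose else ∅ with hS
  have hSfin : ∀ q, (S q).Finite := by
    intro q
    simp only [hS]
    split_ifs with h
    · exact hTfin h.choose h.choose_spec.1
    · exact Set.finite_empty
  have hcover : ∀ g : G, orderOf g = 2 → ∃ t ∈ ⋃ q : G ⧸ N, S q, IsConj g t := by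
    intro g hg
    have hex : ∃ g₀ : G, orderOf g₀ = 2 ∧ ((g₀ : G ⧸ N) = (g : G ⧸ N)) := ⟨g, hg, rfl⟩
    obtain ⟨hg₀ord, hg₀q⟩ := hex.choose_spec
    have hmem : hex.choose⁻¹ * g ∈ N := QuotientGroup.eq.mp hg₀q
    obtain ⟨t, htT, htc⟩ := hTspec hex.choose hg₀ord g hg hmem
    refine ⟨t, Set.mem_iUnion.mpr ⟨(g : G ⧸ N), ?_⟩, htc⟩
    simp only [hS]
    rw [dif_pos hex]
    exact htT
  have hsub : ConjClasses.mk '' {g : G | orderOf g = 2}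
      ⊆ ConjClasses.mk '' ⋃ q : G ⧸ N, S q := by
    rintro x ⟨g, hg, rfl⟩
    obtain ⟨t, htmem, htc⟩ := hcover g hg
    exact ⟨t, htmem, (ConjClasses.mk_eq_mk_iff_isConj.mpr htc).symm⟩
  exact (Set.Finite.image _ (Set.finite_iUnion hSfin)).subset hsub
end
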